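/- For all complex numbers q and z with |q| < 1, the infinite product (-zq;q)_∞ equals the sum ∑_{m=0}^{∞} z^m q^{m(m+1)/2} / (q;q)_m. -/

import Mathlib

open Filter Finset Topology

set_option maxHeartbeats 1000000

namespace EulerAux

noncomputable def D (q : ℂ) (m : ℕ) : ℂ := ∏ i ∈ Finset.range m, (1 - q * q ^ i)

noncomputable def t (q z : ℂ) (m : ℕ) : ℂ :=
  z ^ m * q ^ (m * (m + 1) / 2) / D q m

lemma fac_ne_zero {q : ℂ} (hq : ‖q‖ < 1) (i : ℕ) : (1 - q * q ^ i) ≠ 0 := by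
  intro h
  have h1 : q * q ^ i = 1 := by linear_combination -h
  have h2 : ‖q * q ^ i‖ < 1 := by
    rw [norm_mul, norm_pow, ← pow_succ']
    exact pow_lt_one₀ (norm_nonneg q) hq (Nat.succ_ne_zero i)
  rw [h1] at h2
  simp at h2

lemma D_ne_zero {q : ℂ} (hq : ‖q‖ < 1) (m : ℕ) : D q m ≠ 0 :=
  Finset.prod_ne_zero_iff.2 fun i _ => fac_ne_zero hq i

lemma exp_succ (m : ℕ) : (m + 1) * ((m + 1) + 1) / 2 = m * (m + 1) / 2 + (m + 1) := by
  have h : (m + 1) * ((m + 1) + 1) = m * (m + 1) + 2 * (m + 1) := by ring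
  rw [h, Nat.add_mul_div_left _ _ (by norm_num : (0:ℕ) < 2)]

lemma D_succ (q : ℂ) (m : ℕ) : D q (m + 1) = D q m * (1 - q * q ^ m) :=
  Finset.prod_range_succ _ m

lemma t_zero (q z : ℂ) : t q z 0 = 1 := by simp [t, D]

lemma t_succ {q : ℂ} (hq : ‖q‖ < 1) (z : ℂ) (m : ℕ) :
    t q z (m + 1) = t q z m * (z * q ^ (m + 1) / (1 - q * q ^ m)) := by
  unfold t
  rw [exp_succ, pow_add, D_succ]
  have hD := D_ne_zero hq m
  have hf := fac_ne_zero hq m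
  field_simp
  ring

lemma summable_norm_t {q : ℂ} (hq : ‖q‖ < 1) (z : ℂ) :
    Summable (fun m => ‖t q z m‖) := by
  have hq' : ‖q‖ < 1 := by exact hq
  apply summable_of_ratio_norm_eventually_le (r := 1/2) (by norm_num)
  have hnum : Tendsto (fun m : ℕ => z * q ^ (m + 1)) atTop (𝓝 0) := by
    have := (tendsto_pow_atTop_nhds_zero_of_norm_lt_one hq').comp
      (tendsto_add_atTop_nat 1)
    simpa using this.const_mul z
  have hden : Tendsto (fun m : ℕ => 1 - q * q ^ m) atTop (𝓝 1) := by
    have h1 := (tendsto_pow_atTop_nhds_zero_of_norm_lt_one hq').const_mul q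
    have h2 := Tendsto.sub
      (tendsto_const_nhds : Tendsto (fun _ : ℕ => (1:ℂ)) atTop (𝓝 1)) h1
    simpa using h2
  have h0 : Tendsto (fun m : ℕ => z * q ^ (m + 1) / (1 - q * q ^ m)) atTop (𝓝 0) := by
    have := hnum.div hden one_ne_zero
    rw [zero_div] at this
    exact this
  have hev : ∀ᶠ m : ℕ in atTop, ‖z * q ^ (m + 1) / (1 - q * q ^ m)‖ ≤ 1/2 := by
    have := h0.norm
    simp only [norm_zero] at this
    exact this.eventually_le_const (by norm_num)
  filter_upwards [hev] with m hm
  rw [norm_norm, norm_norm, t_succ hq z m, norm_mul]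
  calc ‖t q z m‖ * ‖z * q ^ (m + 1) / (1 - q * q ^ m)‖
      ≤ ‖t q z m‖ * (1/2) := by
        exact mul_le_mul_of_nonneg_left hm (norm_nonneg _)
    _ = 1/2 * ‖t q z m‖ := by ring

lemma summable_t {q : ℂ} (hq : ‖q‖ < 1) (z : ℂ) :
    Summable (fun m => t q z m) :=
  (summable_norm_t hq z).of_norm

noncomputable def S (q z : ℂ) : ℂ := ∑' m, t q z m

lemma key_rec {q : ℂ} (hq : ‖q‖ < 1) (z : ℂ) (m : ℕ) :
    t q z (m + 1) = t q (z * q) (m + 1) + z * q * t q (z * q) m := by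
  unfold t
  rw [exp_succ, pow_add, D_succ]
  have hD := D_ne_zero hq m
  have hf := fac_ne_zero hq m
  field_simp
  ring

lemma funeq {q : ℂ} (hq : ‖q‖ < 1) (z : ℂ) :
    S q z = (1 + z * q) * S q (z * q) := by
  have hz := summable_t hq z
  have hA := summable_t hq (z * q)
  have hA1 : Summable (fun m => t q (z * q) (m + 1)) := (summable_nat_add_iff 1).2 hA
  have hB : Summable (fun m => z * q * t q (z * q) m) := hA.mul_left _
  calc S q z = t q z 0 + ∑' m, t q z (m + 1) := hz.tsum_eq_zero_add
    _ = t q (z * q) 0 + ∑' m, (t q (z * q) (m + 1) + z * q * t q (z * q) m) := by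
        rw [t_zero, t_zero]
        exact congrArg _ (tsum_congr (key_rec hq z))
    _ = t q (z * q) 0 + ((∑' m, t q (z * q) (m + 1)) + ∑' m, z * q * t q (z * q) m) := by
        rw [hA1.tsum_add hB]
    _ = (t q (z * q) 0 + ∑' m, t q (z * q) (m + 1)) + z * q * ∑' m, t q (z * q) m := by
        rw [tsum_mul_left]; ring
    _ = (1 + z * q) * S q (z * q) := by
        rw [← hA.tsum_eq_zero_add]; unfold S; ring

lemma iter {q : ℂ} (hq : ‖q‖ < 1) (z : ℂ) (n : ℕ) :
    S q z = (∏ i ∈ Finset.range n, (1 + z * q ^ (i + 1))) * S q (z * q ^ n) := by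
  induction n generalizing z with
  | zero => simp
  | succ n ih =>
    rw [funeq hq z, ih (z * q), Finset.prod_range_succ']
    have hp : ∏ i ∈ Finset.range n, (1 + z * q * q ^ (i + 1)) =
        ∏ i ∈ Finset.range n, (1 + z * q ^ ((i + 1) + 1)) :=
      Finset.prod_congr rfl fun i _ => by ring
    have ha : z * q * q ^ n = z * q ^ (n + 1) := by ring
    rw [hp, ha]
    ring

lemma t_scale (q z : ℂ) (n k : ℕ) : t q (z * q ^ n) k = q ^ (n * k) * t q z k := by
  unfold t
  rw [mul_pow, ← pow_mul]
  ring

lemma tendsto_S_one {q : ℂ} (hq : ‖q‖ < 1) (z : ℂ) :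
    Tendsto (fun n => S q (z * q ^ n)) atTop (𝓝 1) := by
  have hq' : ‖q‖ < 1 := by exact hq
  have hCsum : Summable (fun m => ‖t q z (m + 1)‖) :=
    (summable_nat_add_iff 1).2 (summable_norm_t hq z)
  set C := ∑' m, ‖t q z (m + 1)‖ with hC
  have hbound : ∀ n : ℕ, ‖S q (z * q ^ n) - 1‖ ≤ ‖q‖ ^ n * C := by
    intro n
    have hs := summable_t hq (z * q ^ n)
    have h1 : S q (z * q ^ n) - 1 = ∑' m, t q (z * q ^ n) (m + 1) := by
      have := hs.tsum_eq_zero_add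
      rw [t_zero] at this
      unfold S
      rw [this]; ring
    rw [h1]
    have hns : Summable (fun m => ‖t q (z * q ^ n) (m + 1)‖) :=
      (summable_nat_add_iff 1).2 (summable_norm_t hq (z * q ^ n))
    calc ‖∑' m, t q (z * q ^ n) (m + 1)‖ ≤ ∑' m, ‖t q (z * q ^ n) (m + 1)‖ :=
          norm_tsum_le_tsum_norm hns
      _ ≤ ∑' m, ‖q‖ ^ n * ‖t q z (m + 1)‖ := by
          apply Summable.tsum_le_tsum _ hns (hCsum.mul_left _)
          intro m
          rw [t_scale, norm_mul, norm_pow]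
          apply mul_le_mul_of_nonneg_right _ (norm_nonneg _)
          exact pow_le_pow_of_le_one (norm_nonneg q) hq'.le
            (Nat.le_mul_of_pos_right n (Nat.succ_pos m))
      _ = ‖q‖ ^ n * C := tsum_mul_left
  rw [tendsto_iff_norm_sub_tendsto_zero]
  have h0 : Tendsto (fun n : ℕ => ‖q‖ ^ n * C) atTop (𝓝 0) := by
    simpa using (tendsto_pow_atTop_nhds_zero_of_norm_lt_one (by rwa [norm_norm]
      : ‖‖q‖‖ < 1)).mul_const C
  exact squeeze_zero (fun n => norm_nonneg _) hbound h0

lemma mult {q : ℂ} (hq : ‖q‖ < 1) (z : ℂ) :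
    Multipliable (fun i : ℕ => 1 + z * q ^ (i + 1)) := by
  have hq' : ‖q‖ < 1 := by exact hq
  have h0 : Tendsto (fun n : ℕ => ‖z * q ^ (n + 1)‖) atTop (𝓝 0) := by
    have := ((tendsto_pow_atTop_nhds_zero_of_norm_lt_one hq').comp
      (tendsto_add_atTop_nat 1)).const_mul z
    simpa using this.norm
  obtain ⟨N, hN⟩ := eventually_atTop.1 (h0.eventually_le_const (by norm_num :
    (0:ℝ) < 1/2))
  apply Multipliable.comp_nat_add (k := N)
  have hsmall : ∀ n, ‖z * q ^ ((n + N) + 1)‖ ≤ 1/2 := fun n =>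
    hN (n + N) (Nat.le_add_left N n)
  have hg0 : ∀ n : ℕ, (1 : ℂ) + z * q ^ ((n + N) + 1) ≠ 0 := by
    intro n h
    have h1 : z * q ^ ((n + N) + 1) = -1 := by linear_combination h
    have h2 := hsmall n
    rw [h1] at h2
    norm_num at h2
  have hlog : Summable (fun n => Complex.log (1 + z * q ^ ((n + N) + 1))) := by
    apply Summable.of_norm
    have hgeo : Summable (fun n : ℕ => (3/2 * ‖z‖ * ‖q‖ ^ (N + 1)) * ‖q‖ ^ n) :=
      (summable_geometric_of_lt_one (norm_nonneg q) hq').mul_left _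
    apply hgeo.of_nonneg_of_le (fun n => norm_nonneg _)
    intro n
    calc ‖Complex.log (1 + z * q ^ ((n + N) + 1))‖ ≤ 3/2 * ‖z * q ^ ((n + N) + 1)‖ :=
          Complex.norm_log_one_add_half_le_self (hsmall n)
      _ = (3/2 * ‖z‖ * ‖q‖ ^ (N + 1)) * ‖q‖ ^ n := by
          rw [norm_mul, norm_pow]; ring
  have hprod : HasProd (fun n => Complex.exp (Complex.log (1 + z * q ^ ((n + N) + 1))))
      (Complex.exp (∑' n, Complex.log (1 + z * q ^ ((n + N) + 1)))) := hlog.hasSum.cexp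
  have heq : (fun n => Complex.exp (Complex.log (1 + z * q ^ ((n + N) + 1)))) =
      (fun n : ℕ => 1 + z * q ^ ((n + N) + 1)) :=
    funext fun n => Complex.exp_log (hg0 n)
  rw [heq] at hprod
  exact hprod.multipliable

end EulerAux

/-- Euler's identity: for `|q| < 1`,
`(-zq;q)_∞ = ∑_{m=0}^∞ z^m q^{m(m+1)/2} / (q;q)_m`. -/
theorem euler_distinct_parts_identity (q z : ℂ) (hq : ‖q‖ < 1) :
    (∏' i : ℕ, (1 + z * q ^ (i + 1))) =
      ∑' m : ℕ, z ^ m * q ^ (m * (m + 1) / 2) /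
        ∏ i ∈ Finset.range m, (1 - q * q ^ i) := by
  have hm := EulerAux.mult hq z
  have h1 := hm.hasProd.tendsto_prod_nat
  have h2 := EulerAux.tendsto_S_one hq z
  have h3 : Tendsto (fun n => (∏ i ∈ Finset.range n, (1 + z * q ^ (i + 1))) *
      EulerAux.S q (z * q ^ n)) atTop (𝓝 ((∏' i : ℕ, (1 + z * q ^ (i + 1))) * 1)) :=
    h1.mul h2
  have h4 : (fun n => (∏ i ∈ Finset.range n, (1 + z * q ^ (i + 1))) *
      EulerAux.S q (z * q ^ n)) = fun _ => EulerAux.S q z :=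
    funext fun n => (EulerAux.iter hq z n).symm
  rw [h4] at h3
  have h5 := tendsto_nhds_unique h3 tendsto_const_nhds
  rw [mul_one] at h5
  simpa [EulerAux.S, EulerAux.t, EulerAux.D] using h5
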